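/- Let μ be an exchangeable ULC measure on {0,1}^n with rank sequence {a_j}, q_j = a_j / binom(n,j). Then for any fixed coordinate f, the conditional distribution of S = Σ_{e≠f} X_e given X_f = 0 stochastically dominates the conditional distribution of S given X_f = 1. Equivalently, for all k < n: Σ_{r=0}^{k} binom(n-1,r) q_{r+1} / μ(X_f=1) ≥ Σ_{r=0}^{k} binom(n-1,r) q_r / μ(X_f=0). -/

import Mathlib

open Finset

/-- A nonnegative sequence is log-concave with interval support. -/
def LogConcaveSeq (q : ℕ → ℝ) : Prop :=
  (∀ j, q j * q (j + 2) ≤ q (j + 1) ^ 2) ∧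
  (∀ i j k, i ≤ j → j ≤ k → 0 < q i → 0 < q k → 0 < q j)

lemma key_lemma (q : ℕ → ℝ) (hq : ∀ k, 0 ≤ q k) (hlc : LogConcaveSeq q) :
    ∀ d r, q r * q (r + d + 1) ≤ q (r + 1) * q (r + d) := by
  obtain ⟨hlc1, hlc2⟩ := hlc
  intro d
  induction d with
  | zero => intro r; simp [mul_comm]
  | succ d ih =>
    intro r
    by_cases h1 : q (r + d + 1) = 0
    · -- then q r * q (r+d+2) = 0
      have : q r * q (r + d + 1 + 1) = 0 := by
        by_contra h
        have hr : 0 < q r := lt_of_le_of_ne (hq r) (by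
          intro e; exact h (by rw [← e]; ring))
        have hs : 0 < q (r + d + 1 + 1) := by
          rcases lt_or_eq_of_le (hq _) with h' | h'
          · exact h'
          · exact absurd (by rw [← h']; ring) h
        have := hlc2 r (r + d + 1) (r + d + 1 + 1) (by omega) (by omega) hr hs
        exact absurd h1 (ne_of_gt this)
      rw [show r + (d+1) + 1 = r + d + 1 + 1 from by ring, show r + (d+1) = r + d + 1 from by ring,
        this, h1, mul_zero]
    · by_cases h0 : q (r + d) = 0
      · -- then q r = 0
        have hr0 : q r = 0 := by
          by_contra h
          have hr : 0 < q r := lt_of_le_of_ne (hq r) (Ne.symm h)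
          have hs : 0 < q (r + d + 1) := lt_of_le_of_ne (hq _) (Ne.symm h1)
          have := hlc2 r (r + d) (r + d + 1) (by omega) (by omega) hr hs
          exact (ne_of_gt this) h0
        rw [show r + (d+1) + 1 = r + d + 2 from by ring, show r + (d+1) = r + d + 1 from by ring,
          hr0, zero_mul]
        exact mul_nonneg (hq _) (hq _)
      · have hs1 : 0 < q (r + d + 1) := lt_of_le_of_ne (hq _) (Ne.symm h1)
        have hs0 : 0 < q (r + d) := lt_of_le_of_ne (hq _) (Ne.symm h0)
        have h2 := hlc1 (r + d)
        have h3 := ih r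
        -- q r * q (r+d+2) ≤ q (r+1) * q (r+d+1)
        rw [show r + (d+1) + 1 = r + d + 2 from by ring, show r + (d+1) = r + d + 1 from by ring]
        have hmul : (q r * q (r + d + 2)) * (q (r + d) * q (r + d + 1)) ≤
            (q (r + 1) * q (r + d + 1)) * (q (r + d) * q (r + d + 1)) := by
          calc (q r * q (r + d + 2)) * (q (r + d) * q (r + d + 1))
              = (q r * q (r + d + 1)) * (q (r + d) * q (r + d + 2)) := by ring
            _ ≤ (q (r + 1) * q (r + d)) * (q (r + d + 1) ^ 2) := by
                apply mul_le_mul h3 h2 (mul_nonneg (hq _) (hq _))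
                  (mul_nonneg (hq _) (hq _))
            _ = (q (r + 1) * q (r + d + 1)) * (q (r + d) * q (r + d + 1)) := by ring
        exact le_of_mul_le_mul_right hmul (mul_pos hs0 hs1)

lemma key (q : ℕ → ℝ) (hq : ∀ k, 0 ≤ q k) (hlc : LogConcaveSeq q)
    {r s : ℕ} (h : r ≤ s) : q r * q (s + 1) ≤ q (r + 1) * q s := by
  obtain ⟨d, rfl⟩ := Nat.exists_eq_add_of_le h
  exact key_lemma q hq hlc d r

theorem stmt_10 (n : ℕ) (hn : 0 < n) (q : ℕ → ℝ)
    (hq : ∀ k, 0 ≤ q k) (hlc : LogConcaveSeq q)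
    (hsupp : ∀ k, n < k → q k = 0)
    (hprob : ∑ k ∈ Finset.range (n+1), (n.choose k : ℝ) * q k = 1)
    (hM0 : 0 < ∑ r ∈ Finset.range n, ((n-1).choose r : ℝ) * q r)
    (hM1 : 0 < ∑ r ∈ Finset.range n, ((n-1).choose r : ℝ) * q (r+1)) :
    ∀ k < n,
      (∑ r ∈ Finset.range (k+1), ((n-1).choose r : ℝ) * q r)
          / (∑ r ∈ Finset.range n, ((n-1).choose r : ℝ) * q r)
        ≤ (∑ r ∈ Finset.range (k+1), ((n-1).choose r : ℝ) * q (r+1))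
          / (∑ r ∈ Finset.range n, ((n-1).choose r : ℝ) * q (r+1)) := by
  intro k hk
  rw [div_le_div_iff₀ hM0 hM1]
  -- split range n into range (k+1) and Ico (k+1) n
  have hsplit0 : ∑ r ∈ Finset.range n, ((n-1).choose r : ℝ) * q r
      = (∑ r ∈ Finset.range (k+1), ((n-1).choose r : ℝ) * q r)
        + ∑ r ∈ Finset.Ico (k+1) n, ((n-1).choose r : ℝ) * q r := by
    rw [Finset.range_eq_Ico, ← Finset.sum_Ico_consecutive _ (Nat.zero_le (k+1)) hk, Finset.range_eq_Ico]
  have hsplit1 : ∑ r ∈ Finset.range n, ((n-1).choose r : ℝ) * q (r+1)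
      = (∑ r ∈ Finset.range (k+1), ((n-1).choose r : ℝ) * q (r+1))
        + ∑ r ∈ Finset.Ico (k+1) n, ((n-1).choose r : ℝ) * q (r+1) := by
    rw [Finset.range_eq_Ico, ← Finset.sum_Ico_consecutive _ (Nat.zero_le (k+1)) hk, Finset.range_eq_Ico]
  have hAB : (∑ r ∈ Finset.range (k+1), ((n-1).choose r : ℝ) * q r)
      * (∑ s ∈ Finset.Ico (k+1) n, ((n-1).choose s : ℝ) * q (s+1))
      ≤ (∑ r ∈ Finset.range (k+1), ((n-1).choose r : ℝ) * q (r+1))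
      * (∑ s ∈ Finset.Ico (k+1) n, ((n-1).choose s : ℝ) * q s) := by
    rw [Finset.sum_mul_sum, Finset.sum_mul_sum]
    apply Finset.sum_le_sum
    intro r hr
    apply Finset.sum_le_sum
    intro s hs
    simp only [Finset.mem_range] at hr
    simp only [Finset.mem_Ico] at hs
    have hrs : r ≤ s := by omega
    have hkey := key q hq hlc hrs
    have hc : (0:ℝ) ≤ ((n-1).choose r : ℝ) * ((n-1).choose s : ℝ) := by positivity
    calc ((n-1).choose r : ℝ) * q r * (((n-1).choose s : ℝ) * q (s+1))
        = (((n-1).choose r : ℝ) * ((n-1).choose s : ℝ)) * (q r * q (s+1)) := by ring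
      _ ≤ (((n-1).choose r : ℝ) * ((n-1).choose s : ℝ)) * (q (r+1) * q s) :=
          mul_le_mul_of_nonneg_left hkey hc
      _ = ((n-1).choose r : ℝ) * q (r+1) * (((n-1).choose s : ℝ) * q s) := by ring
  rw [hsplit0, hsplit1]
  nlinarith [hAB]
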